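/- For every natural number n ≥ 1, (2/n)·H(n−1)·F(n) = Σ_{i=1}^{n−1} ( L(i)·F(n−i) ) / ( i·(n−i) ), where H(n) = Σ_{k=1}^{n} 1/k is the n-th harmonic number (H(0) = 0). -/

import Mathlib

noncomputable def genFib (a b : ℝ) : ℕ → ℝ
  | 0 => 0
  | 1 => 1
  | n + 2 => a * genFib a b (n + 1) + b * genFib a b n

noncomputable def genLuc (a b : ℝ) : ℕ → ℝ
  | 0 => 2
  | 1 => a
  | n + 2 => a * genLuc a b (n + 1) + b * genLuc a b n

lemma fib_rec (a b : ℝ) (n : ℕ) :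
    genFib a b (n + 2) = a * genFib a b (n + 1) + b * genFib a b n := rfl

lemma luc_rec (a b : ℝ) (n : ℕ) :
    genLuc a b (n + 2) = a * genLuc a b (n + 1) + b * genLuc a b n := rfl

lemma luc_fib (a b : ℝ) : ∀ k, genLuc a b k = 2 * genFib a b (k+1) - a * genFib a b k := by
  intro k
  induction k using Nat.twoStepInduction with
  | zero => show (2:ℝ) = 2 * 1 - a * 0; ring
  | one => show a = 2 * genFib a b 2 - a * 1
           rw [show (2:ℕ) = 0 + 2 from rfl, fib_rec]
           show a = 2 * (a * 1 + b * 0) - a * 1; ring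
  | more k ih1 ih2 =>
    rw [luc_rec, ih1, ih2, show k+2+1 = k+1+2 from rfl, fib_rec a b (k+1),
      show k+1+1 = k+2 from rfl, fib_rec a b k]
    ring

lemma fib_add (a b : ℝ) : ∀ m k, 2 * genFib a b (m + k) =
    genLuc a b m * genFib a b k + genFib a b m * genLuc a b k := by
  intro m
  induction m using Nat.twoStepInduction with
  | zero => intro k; rw [Nat.zero_add]; show 2 * genFib a b k = 2 * genFib a b k + 0 * genLuc a b k; ring
  | one =>
    intro k
    rw [show 1 + k = k + 1 from by omega, luc_fib a b k]
    show 2 * genFib a b (k+1) = a * genFib a b k + 1 * _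
    ring
  | more m ih1 ih2 =>
    intro k
    rw [show m + 2 + k = (m + k) + 2 from by ring, fib_rec, luc_rec, fib_rec a b m,
      show m + k + 1 = (m+1) + k from by ring]
    linear_combination a * ih2 k + b * ih1 k

noncomputable def harmonicR (n : ℕ) : ℝ := ∑ k ∈ Finset.Icc 1 n, (1 : ℝ) / k

lemma sum_reflect (n : ℕ) (f : ℕ → ℝ) :
    ∑ i ∈ Finset.Ico 1 n, f (n - i) = ∑ i ∈ Finset.Ico 1 n, f i := by
  refine Finset.sum_bij' (fun i _ => n - i) (fun i _ => n - i) ?_ ?_ ?_ ?_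
    (fun a ha => rfl) <;> simp only [Finset.mem_Ico] <;> intros <;> omega

theorem genFib_harmonic_identity (a b : ℝ) (n : ℕ) (hn : 1 ≤ n) :
    (2 / (n : ℝ)) * harmonicR (n - 1) * genFib a b n =
      ∑ i ∈ Finset.Ico 1 n,
        genLuc a b i * genFib a b (n - i) / ((i : ℝ) * ((n : ℝ) - (i : ℝ))) := by
  have hn0 : (0:ℝ) < (n:ℝ) := by exact_mod_cast hn
  have hH : harmonicR (n - 1) = ∑ i ∈ Finset.Ico 1 n, (1:ℝ) / i := by
    rw [harmonicR, ← Finset.Ico_add_one_right_eq_Icc]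
    congr 1
  set S := ∑ i ∈ Finset.Ico 1 n,
      genLuc a b i * genFib a b (n - i) / ((i : ℝ) * ((n : ℝ) - (i : ℝ))) with hS
  have hrefl : S = ∑ i ∈ Finset.Ico 1 n,
      genLuc a b (n - i) * genFib a b i / ((i : ℝ) * ((n : ℝ) - (i : ℝ))) := by
    rw [hS, ← sum_reflect n (fun i => genLuc a b i * genFib a b (n - i) /
      ((i : ℝ) * ((n : ℝ) - (i : ℝ))))]
    refine Finset.sum_congr rfl ?_
    intro i hi
    simp only [Finset.mem_Ico] at hi
    have h1 : n - (n - i) = i := by omega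
    have h2 : ((n - i : ℕ) : ℝ) = (n:ℝ) - (i:ℝ) := by
      have : i ≤ n := by omega
      push_cast [this]; ring
    rw [h1, h2]
    ring
  have key : ∀ i ∈ Finset.Ico 1 n,
      genLuc a b i * genFib a b (n - i) + genLuc a b (n - i) * genFib a b i
        = 2 * genFib a b n := by
    intro i hi
    simp only [Finset.mem_Ico] at hi
    have h := fib_add a b i (n - i)
    rw [show i + (n - i) = n from by omega] at h
    linarith
  have h2S : 2 * S = ∑ i ∈ Finset.Ico 1 n,
      2 * genFib a b n / ((i : ℝ) * ((n : ℝ) - (i : ℝ))) := by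
    calc 2 * S = S + S := by ring
    _ = ∑ i ∈ Finset.Ico 1 n,
        (genLuc a b i * genFib a b (n - i) + genLuc a b (n - i) * genFib a b i)
          / ((i : ℝ) * ((n : ℝ) - (i : ℝ))) := by
        nth_rewrite 2 [hrefl]
        rw [hS, ← Finset.sum_add_distrib]
        exact Finset.sum_congr rfl (fun i _ => (add_div _ _ _).symm)
    _ = _ := Finset.sum_congr rfl (fun i hi => by rw [key i hi])
  have hpf : ∀ i ∈ Finset.Ico 1 n,
      2 * genFib a b n / ((i : ℝ) * ((n : ℝ) - (i : ℝ)))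
        = (2 / n) * genFib a b n * (1 / i) + (2 / n) * genFib a b n * (1 / ((n:ℝ) - i)) := by
    intro i hi
    simp only [Finset.mem_Ico] at hi
    have hi0 : (0:ℝ) < (i:ℝ) := by exact_mod_cast hi.1
    have hni : (0:ℝ) < (n:ℝ) - (i:ℝ) := by
      have : (i:ℝ) < (n:ℝ) := by exact_mod_cast hi.2
      linarith
    field_simp
    ring
  have hsum2 : ∑ i ∈ Finset.Ico 1 n, (1:ℝ) / ((n:ℝ) - i)
      = ∑ i ∈ Finset.Ico 1 n, (1:ℝ) / i := by
    rw [← sum_reflect n (fun i => (1:ℝ) / i)]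
    refine Finset.sum_congr rfl ?_
    intro i hi
    simp only [Finset.mem_Ico] at hi
    have h2 : ((n - i : ℕ) : ℝ) = (n:ℝ) - (i:ℝ) := by
      have : i ≤ n := by omega
      push_cast [this]; ring
    rw [h2]
  have hfinal : 2 * S = 2 * ((2 / n) * harmonicR (n - 1) * genFib a b n) := by
    rw [h2S, Finset.sum_congr rfl hpf, Finset.sum_add_distrib, ← Finset.mul_sum,
      ← Finset.mul_sum, hsum2, hH]
    ring
  linarith
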